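/- arXiv:2303.11362 — 6 statements merged into one kernel-verified Lean document; each statement's English description precedes it below -/
import Mathlib

section
/- Let V be a finite-dimensional complex vector space with a symmetric bilinear form B. Let u₁, u₂ ∈ V be nonzero isotropic vectors and W₁ ⊆ u₁^⊥, W₂ ⊆ u₂^⊥ linear subspaces. Suppose 𝔥 ⊆ End(V) is a Lie subalgebra (with respect to the commutator bracket) containing T_{u₁,w} for every w ∈ W₁ and T_{u₂,w} for every w ∈ W₂. If there exists v ∈ W₁ ∩ W₂ with B(v,v) ≠ 0, then T_{u₁,u₂} ∈ 𝔥. -/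
/-- For a symmetric bilinear form `B` on `V` and vectors `a b : V`, the endomorphism
`x ↦ B(x,b)•a − B(x,a)•b`, which corresponds to `a ∧ b ∈ Λ²V ≅ so(V,B)`. -/
noncomputable def Tmap {K V : Type*} [CommRing K] [AddCommGroup V] [Module K V]
    (B : V →ₗ[K] V →ₗ[K] K) (a b : V) : Module.End K V :=
  (LinearMap.toSpanSingleton K V a).comp (B.flip b) -
    (LinearMap.toSpanSingleton K V b).comp (B.flip a)

attribute [local instance 100] LieRing.ofAssociativeRing

theorem stmt0 (V : Type*) [AddCommGroup V] [Module ℂ V] [FiniteDimensional ℂ V]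
    (B : V →ₗ[ℂ] V →ₗ[ℂ] ℂ) (hsymm : ∀ x y : V, B x y = B y x)
    (u₁ u₂ : V) (hu₁ : u₁ ≠ 0) (hu₂ : u₂ ≠ 0)
    (hiso₁ : B u₁ u₁ = 0) (hiso₂ : B u₂ u₂ = 0)
    (W₁ W₂ : Submodule ℂ V)
    (hW₁ : ∀ w ∈ W₁, B w u₁ = 0) (hW₂ : ∀ w ∈ W₂, B w u₂ = 0)
    (𝔥 : LieSubalgebra ℂ (Module.End ℂ V))
    (h₁ : ∀ w ∈ W₁, Tmap B u₁ w ∈ 𝔥) (h₂ : ∀ w ∈ W₂, Tmap B u₂ w ∈ 𝔥)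
    (v : V) (hv₁ : v ∈ W₁) (hv₂ : v ∈ W₂) (hv : B v v ≠ 0) :
    Tmap B u₁ u₂ ∈ 𝔥 := by
  have hvu₁ : B v u₁ = 0 := hW₁ v hv₁
  have hvu₂ : B v u₂ = 0 := hW₂ v hv₂
  have hu₁v : B u₁ v = 0 := by rw [hsymm]; exact hvu₁
  have hu₂v : B u₂ v = 0 := by rw [hsymm]; exact hvu₂
  have key : ⁅Tmap B u₁ v, Tmap B u₂ v⁆ = (-(B v v)) • Tmap B u₁ u₂ := by
    ext x
    simp only [Ring.lie_def, LinearMap.sub_apply, LinearMap.smul_apply,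
      Module.End.mul_apply, Tmap, LinearMap.coe_comp, Function.comp_apply,
      LinearMap.toSpanSingleton_apply, LinearMap.flip_apply, map_sub, map_smul,
      smul_eq_mul, hvu₁, hvu₂, hu₁v, hu₂v, hiso₁, hiso₂, hsymm u₂ u₁,
      mul_zero, zero_mul, zero_smul, sub_zero, zero_sub]
    module
  have hmem : ⁅Tmap B u₁ v, Tmap B u₂ v⁆ ∈ 𝔥 := 𝔥.lie_mem (h₁ v hv₁) (h₂ v hv₂)
  have : Tmap B u₁ u₂ = (-(B v v))⁻¹ • ⁅Tmap B u₁ v, Tmap B u₂ v⁆ := by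
    rw [key, smul_smul, inv_mul_cancel₀ (by simpa using hv), one_smul]
  rw [this]
  exact 𝔥.smul_mem _ hmem
end

section
/- Let V be a complex vector space of dimension d ≥ 5 with a nondegenerate symmetric bilinear form B. Let u₁, u₂ ∈ V be nonzero isotropic vectors, and suppose 𝔥 ⊆ End(V) is a Lie subalgebra (commutator bracket) containing T_{u₁,w} for every w ∈ u₁^⊥ and T_{u₂,w} for every w ∈ u₂^⊥. Then T_{u₁,u₂} ∈ 𝔥. -/
attribute [local instance 100] LieRing.ofAssociativeRing

lemma keybracket (V : Type*) [AddCommGroup V] [Module ℂ V]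
    (B : V →ₗ[ℂ] V →ₗ[ℂ] ℂ) (hsymm : ∀ x y : V, B x y = B y x)
    (u₁ u₂ w : V) (hw1 : B w u₁ = 0) (hw2 : B w u₂ = 0) :
    ⁅Tmap B u₁ w, Tmap B u₂ w⁆ = (-(B w w)) • Tmap B u₁ u₂ := by
  ext x
  simp only [Ring.lie_def, Tmap, LinearMap.sub_apply, LinearMap.comp_apply,
    LinearMap.toSpanSingleton_apply, LinearMap.flip_apply, LinearMap.smul_apply,
    Module.End.mul_apply, map_sub, map_smul, smul_eq_mul, smul_sub, smul_smul]
  rw [hsymm u₂ w, hsymm u₂ u₁, hsymm u₁ w] at *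
  rw [hw1, hw2]
  module

theorem stmt1 (V : Type*) [AddCommGroup V] [Module ℂ V] [FiniteDimensional ℂ V]
    (hd : 5 ≤ Module.finrank ℂ V)
    (B : V →ₗ[ℂ] V →ₗ[ℂ] ℂ) (hsymm : ∀ x y : V, B x y = B y x)
    (hnd : ∀ x : V, (∀ y : V, B x y = 0) → x = 0)
    (u₁ u₂ : V) (hu₁ : u₁ ≠ 0) (hu₂ : u₂ ≠ 0)
    (hiso₁ : B u₁ u₁ = 0) (hiso₂ : B u₂ u₂ = 0)
    (𝔥 : LieSubalgebra ℂ (Module.End ℂ V))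
    (h₁ : ∀ w : V, B w u₁ = 0 → Tmap B u₁ w ∈ 𝔥)
    (h₂ : ∀ w : V, B w u₂ = 0 → Tmap B u₂ w ∈ 𝔥) :
    Tmap B u₁ u₂ ∈ 𝔥 := by
  by_cases hc : B u₂ u₁ = 0
  · exact h₁ u₂ hc
  -- find w ⊥ u₁, u₂ with B w w ≠ 0
  set W : Submodule ℂ V := LinearMap.ker ((B.flip u₁).prod (B.flip u₂)) with hW
  have hWmem : ∀ x : V, x ∈ W ↔ B x u₁ = 0 ∧ B x u₂ = 0 := by
    intro x
    simp [hW, LinearMap.mem_ker, LinearMap.prod_apply, Prod.ext_iff]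
  have hWrank : Module.finrank ℂ V ≤ Module.finrank ℂ W + 2 := by
    have h := LinearMap.finrank_range_add_finrank_ker ((B.flip u₁).prod (B.flip u₂))
    rw [← hW] at h
    have hr : Module.finrank ℂ (LinearMap.range ((B.flip u₁).prod (B.flip u₂))) ≤ 2 := by
      have := Submodule.finrank_le (LinearMap.range ((B.flip u₁).prod (B.flip u₂)))
      simpa using this
    omega
  obtain ⟨w, hwW, hww⟩ : ∃ w ∈ W, B w w ≠ 0 := by
    by_contra hiso
    push_neg at hiso
    -- W is totally isotropic
    have hWorth : W ≤ LinearMap.BilinForm.orthogonal B W := by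
      intro x hx
      rw [LinearMap.BilinForm.mem_orthogonal_iff]
      intro y hy
      have h1 : B (y + x) (y + x) = 0 := hiso _ (W.add_mem hy hx)
      have h2 : B y y = 0 := hiso y hy
      have h3 : B x x = 0 := hiso x hx
      have h4 : B x y = B y x := hsymm x y
      simp only [map_add, LinearMap.add_apply] at h1
      have : (2 : ℂ) * B y x = 0 := by linear_combination h1 - h2 - h3 - h4
      have := mul_eq_zero.mp this
      simpa using this
    have hnd' : LinearMap.BilinForm.Nondegenerate B :=
      ⟨hnd, fun y h => hnd y (fun x => by rw [hsymm]; exact h x)⟩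
    have hrefl : B.IsRefl := fun x y h => by rw [hsymm]; exact h
    have horth := LinearMap.BilinForm.finrank_orthogonal hnd' W
    have hle := Submodule.finrank_mono hWorth
    rw [horth] at hle
    have hWle : Module.finrank ℂ W ≤ Module.finrank ℂ V := Submodule.finrank_le W
    omega
  rw [hWmem] at hwW
  have hbr := keybracket V B hsymm u₁ u₂ w hwW.1 hwW.2
  have hmem : ⁅Tmap B u₁ w, Tmap B u₂ w⁆ ∈ 𝔥 :=
    LieSubalgebra.lie_mem 𝔥 (h₁ w hwW.1) (h₂ w hwW.2)
  rw [hbr] at hmem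
  have := 𝔥.smul_mem (-(B w w))⁻¹ hmem
  rwa [smul_smul, inv_mul_cancel₀ (by simpa using hww), one_smul] at this
end

section
/- Let V be a complex vector space of dimension d ≥ 7 with a nondegenerate symmetric bilinear form B. For i = 1, 2 let Lᵢ ⊆ V be a one-dimensional subspace and uᵢ a nonzero isotropic vector with uᵢ ∈ Lᵢ^⊥ and uᵢ ∉ Lᵢ (so dim(Lᵢ + ℂuᵢ) = 2), and set Wᵢ = (Lᵢ + ℂuᵢ)^⊥. Suppose 𝔥 ⊆ End(V) is a Lie subalgebra (commutator bracket) containing T_{uᵢ,w} for every w ∈ Wᵢ and both i = 1, 2. Then T_{u₁,u₂} ∈ 𝔥. -/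
attribute [local instance] LieRing.ofAssociativeRing

lemma Tmap_apply {K V : Type*} [CommRing K] [AddCommGroup V] [Module K V]
    (B : V →ₗ[K] V →ₗ[K] K) (a b x : V) :
    Tmap B a b x = B x b • a - B x a • b := by
  simp [Tmap, LinearMap.toSpanSingleton_apply]

lemma Tmap_bracket {K V : Type*} [CommRing K] [AddCommGroup V] [Module K V]
    (B : V →ₗ[K] V →ₗ[K] K) (hsymm : ∀ x y : V, B x y = B y x)
    (u₁ u₂ w : V) (h1 : B w u₁ = 0) (h2 : B w u₂ = 0) :
    ⁅Tmap B u₁ w, Tmap B u₂ w⁆ = (-(B w w)) • Tmap B u₁ u₂ := by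
  have h1' : B u₁ w = 0 := (hsymm u₁ w).trans h1
  have h2' : B u₂ w = 0 := (hsymm u₂ w).trans h2
  ext x
  simp only [Ring.lie_def, LinearMap.sub_apply, Module.End.mul_apply, LinearMap.smul_apply,
    Tmap_apply, map_sub, map_smul, smul_eq_mul, smul_sub, smul_smul, h1, h2, h1', h2',
    hsymm u₂ u₁]
  module

theorem stmt2 (V : Type*) [AddCommGroup V] [Module ℂ V] [FiniteDimensional ℂ V]
    (hd : 7 ≤ Module.finrank ℂ V)
    (B : V →ₗ[ℂ] V →ₗ[ℂ] ℂ) (hsymm : ∀ x y : V, B x y = B y x)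
    (hnd : ∀ x : V, (∀ y : V, B x y = 0) → x = 0)
    (L₁ L₂ : Submodule ℂ V)
    (hL₁ : Module.finrank ℂ L₁ = 1) (hL₂ : Module.finrank ℂ L₂ = 1)
    (u₁ u₂ : V) (hu₁ : u₁ ≠ 0) (hu₂ : u₂ ≠ 0)
    (hiso₁ : B u₁ u₁ = 0) (hiso₂ : B u₂ u₂ = 0)
    (hu₁L : ∀ l ∈ L₁, B u₁ l = 0) (hu₂L : ∀ l ∈ L₂, B u₂ l = 0)
    (hu₁nL : u₁ ∉ L₁) (hu₂nL : u₂ ∉ L₂)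
    (𝔥 : LieSubalgebra ℂ (Module.End ℂ V))
    -- `W₁ = (L₁ + ℂu₁)^⊥`: the elements orthogonal to `u₁` and to all of `L₁`
    (h₁ : ∀ w : V, B w u₁ = 0 → (∀ l ∈ L₁, B w l = 0) → Tmap B u₁ w ∈ 𝔥)
    (h₂ : ∀ w : V, B w u₂ = 0 → (∀ l ∈ L₂, B w l = 0) → Tmap B u₂ w ∈ 𝔥) :
    Tmap B u₁ u₂ ∈ 𝔥 := by
  classical
  have hrefl : (B : LinearMap.BilinForm ℂ V).IsRefl := fun x y h => (hsymm y x).trans h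
  have hND : LinearMap.BilinForm.Nondegenerate (B : LinearMap.BilinForm ℂ V) :=
    (LinearMap.IsRefl.nondegenerate_iff_separatingLeft hrefl).mpr fun x h => hnd x h
  set U : Submodule ℂ V := L₁ ⊔ L₂ ⊔ (ℂ ∙ u₁) ⊔ (ℂ ∙ u₂) with hU
  set S : Submodule ℂ V := LinearMap.BilinForm.orthogonal B U with hS
  have hu₁U : u₁ ∈ U := by
    apply Submodule.mem_sup_left
    exact Submodule.mem_sup_right (Submodule.mem_span_singleton_self u₁)
  have hu₂U : u₂ ∈ U := Submodule.mem_sup_right (Submodule.mem_span_singleton_self u₂)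
  have hL₁U : L₁ ≤ U := le_trans (le_trans le_sup_left le_sup_left) le_sup_left
  have hL₂U : L₂ ≤ U := le_trans (le_trans le_sup_right le_sup_left) le_sup_left
  -- basic facts about members of S
  have hSu₁ : ∀ s ∈ S, B s u₁ = 0 := fun s hs => hrefl _ _ (hs u₁ hu₁U)
  have hSu₂ : ∀ s ∈ S, B s u₂ = 0 := fun s hs => hrefl _ _ (hs u₂ hu₂U)
  have hSL₁ : ∀ s ∈ S, ∀ l ∈ L₁, B s l = 0 := fun s hs l hl => hrefl _ _ (hs l (hL₁U hl))
  have hSL₂ : ∀ s ∈ S, ∀ l ∈ L₂, B s l = 0 := fun s hs l hl => hrefl _ _ (hs l (hL₂U hl))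
  by_cases hex : ∃ w ∈ S, B w w ≠ 0
  · obtain ⟨w, hwS, hww⟩ := hex
    have key := Tmap_bracket B hsymm u₁ u₂ w (hSu₁ w hwS) (hSu₂ w hwS)
    have hmem : ⁅Tmap B u₁ w, Tmap B u₂ w⁆ ∈ 𝔥 :=
      𝔥.lie_mem (h₁ w (hSu₁ w hwS) (hSL₁ w hwS)) (h₂ w (hSu₂ w hwS) (hSL₂ w hwS))
    rw [key] at hmem
    have := 𝔥.smul_mem (-(B w w))⁻¹ hmem
    rwa [smul_smul, inv_mul_cancel₀ (neg_ne_zero.mpr hww), one_smul] at this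
  · -- S is totally isotropic
    push_neg at hex
    have hiso : ∀ s ∈ S, ∀ t ∈ S, B s t = 0 := by
      intro s hs t ht
      have h1 := hex (s + t) (S.add_mem hs ht)
      have h2 := hex s hs
      have h3 := hex t ht
      have h4 : B s t = B t s := hsymm s t
      simp only [map_add, LinearMap.add_apply] at h1
      rw [h2, h3] at h1
      have : (2 : ℂ) * B s t = 0 := by linear_combination h1 + h4
      simpa using this
    -- claim u₂ ∈ S
    have hu₂S : u₂ ∈ S := by
      by_contra hu₂S
      set S' : Submodule ℂ V := S ⊔ (ℂ ∙ u₂) with hS'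
      have hSS' : S < S' := lt_of_le_of_ne le_sup_left (by
        intro h
        exact hu₂S (h ▸ Submodule.mem_sup_right (Submodule.mem_span_singleton_self u₂)))
      -- S' totally isotropic
      have hiso' : ∀ s ∈ S', ∀ t ∈ S', B s t = 0 := by
        intro s hs t ht
        obtain ⟨a, ha, b, hb, rfl⟩ := Submodule.mem_sup.mp hs
        obtain ⟨c, hc, d, hd, rfl⟩ := Submodule.mem_sup.mp ht
        obtain ⟨β, rfl⟩ := Submodule.mem_span_singleton.mp hb
        obtain ⟨δ, rfl⟩ := Submodule.mem_span_singleton.mp hd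
        have h1 : B a c = 0 := hiso a ha c hc
        have h2 : B a u₂ = 0 := hSu₂ a ha
        have h3 : B u₂ c = 0 := hrefl _ _ (hSu₂ c hc)
        simp [map_add, map_smul, h1, h2, h3, hiso₂]
      have hle : S' ≤ LinearMap.BilinForm.orthogonal B S' := fun s hs t ht => hiso' t ht s hs
      have hdim' : Module.finrank ℂ S' ≤ Module.finrank ℂ V - Module.finrank ℂ S' := by
        calc Module.finrank ℂ S'
            ≤ Module.finrank ℂ (LinearMap.BilinForm.orthogonal B S') :=
              Submodule.finrank_mono hle
          _ = Module.finrank ℂ V - Module.finrank ℂ S' :=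
              LinearMap.BilinForm.finrank_orthogonal (B := B) hND S'
      have hdimS : Module.finrank ℂ S = Module.finrank ℂ V - Module.finrank ℂ U :=
        LinearMap.BilinForm.finrank_orthogonal (B := B) hND U
      have hU4 : Module.finrank ℂ U ≤ 4 := by
        have e1 : Module.finrank ℂ (ℂ ∙ u₁) = 1 := finrank_span_singleton hu₁
        have e2 : Module.finrank ℂ (ℂ ∙ u₂) = 1 := finrank_span_singleton hu₂
        have s1 := Submodule.finrank_sup_add_finrank_inf_eq L₁ L₂
        have s2 := Submodule.finrank_sup_add_finrank_inf_eq (L₁ ⊔ L₂) (ℂ ∙ u₁)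
        have s3 := Submodule.finrank_sup_add_finrank_inf_eq (L₁ ⊔ L₂ ⊔ (ℂ ∙ u₁)) (ℂ ∙ u₂)
        rw [hU]
        omega
      have hS'S : Module.finrank ℂ S < Module.finrank ℂ S' :=
        Submodule.finrank_lt_finrank_of_lt hSS'
      have hUle : Module.finrank ℂ U ≤ Module.finrank ℂ V := Submodule.finrank_le U
      omega
    exact h₁ u₂ (hSu₁ u₂ hu₂S) (hSL₁ u₂ hu₂S)
end

section
/- Let V be a finite-dimensional vector space over ℚ with a nondegenerate symmetric bilinear form q, and let V_ℂ = V ⊗_ℚ ℂ with the ℂ-bilinear extension of q. The group of field automorphisms of ℂ acts on V_ℂ through the second tensor factor. Let u ∈ V_ℂ be a nonzero vector such that no nonzero rational vector (element of V ⊗ 1 ⊆ V_ℂ) is q-orthogonal to u. Then the vectors ξ(u), where ξ ranges over all field automorphisms of ℂ, span V_ℂ over ℂ. -/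
open TensorProduct

/-- A field automorphism of `ℂ`, viewed as a `ℚ`-linear map. -/
noncomputable def ratLinearOfRingEquiv (ξ : ℂ ≃+* ℂ) : ℂ →ₗ[ℚ] ℂ where
  toFun := ξ
  map_add' := map_add ξ
  map_smul' := fun q x => by
    simp [Rat.smul_def, map_mul, map_ratCast]

/-- The action of a field automorphism `ξ` of `ℂ` on `V_ℂ = ℂ ⊗[ℚ] V`
through the first tensor factor. -/
noncomputable def galAction (V : Type*) [AddCommGroup V] [Module ℚ V] (ξ : ℂ ≃+* ℂ) :
    ℂ ⊗[ℚ] V →ₗ[ℚ] ℂ ⊗[ℚ] V :=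
  LinearMap.rTensor V (ratLinearOfRingEquiv ξ)

section Aux

variable {V : Type*} [AddCommGroup V] [Module ℚ V]

theorem galAction_tmul (ξ : ℂ ≃+* ℂ) (a : ℂ) (v : V) :
    galAction V ξ (a ⊗ₜ v) = ξ a ⊗ₜ v := rfl

theorem galAction_smul (ξ : ℂ ≃+* ℂ) (a : ℂ) (x : ℂ ⊗[ℚ] V) :
    galAction V ξ (a • x) = ξ a • galAction V ξ x := by
  induction x using TensorProduct.induction_on with
  | zero => simp
  | tmul b v =>
      rw [smul_tmul', galAction_tmul, galAction_tmul, smul_tmul', smul_eq_mul, smul_eq_mul,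
        map_mul]
  | add x y hx hy => rw [smul_add, map_add, map_add, hx, hy, smul_add]

theorem galAction_galAction (ξ ξ' : ℂ ≃+* ℂ) (x : ℂ ⊗[ℚ] V) :
    galAction V ξ (galAction V ξ' x) = galAction V (ξ'.trans ξ) x := by
  induction x using TensorProduct.induction_on with
  | zero => simp
  | tmul a v => rfl
  | add x y hx hy => rw [map_add, map_add, map_add, hx, hy]

theorem galAction_refl (x : ℂ ⊗[ℚ] V) : galAction V (RingEquiv.refl ℂ) x = x := by
  induction x using TensorProduct.induction_on with
  | zero => simp
  | tmul a v => rfl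
  | add x y hx hy => rw [map_add, hx, hy]

theorem galAction_mem_span (z : ℂ ⊗[ℚ] V) (ξ : ℂ ≃+* ℂ) {x : ℂ ⊗[ℚ] V}
    (hx : x ∈ Submodule.span ℂ {y : ℂ ⊗[ℚ] V | ∃ ζ : ℂ ≃+* ℂ, y = galAction V ζ z}) :
    galAction V ξ x ∈ Submodule.span ℂ {y : ℂ ⊗[ℚ] V | ∃ ζ : ℂ ≃+* ℂ, y = galAction V ζ z} := by
  induction hx using Submodule.span_induction with
  | mem x hx =>
      obtain ⟨ζ, rfl⟩ := hx
      exact Submodule.subset_span ⟨ζ.trans ξ, galAction_galAction ξ ζ z⟩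
  | zero => simp
  | add x y _ _ h1 h2 => rw [map_add]; exact add_mem h1 h2
  | smul a x _ h1 => rw [galAction_smul]; exact Submodule.smul_mem _ _ h1

end Aux

noncomputable section Extend

open MvPolynomial

theorem exists_ringEquiv_extend (F : Type) [Field F] [Algebra F ℂ] (φ : F ≃+* F)
    (s : Set ℂ) (hs : IsTranscendenceBasis F ((↑) : s → ℂ)) (e : s ≃ s) :
    ∃ ξ : ℂ ≃+* ℂ, (∀ k : F, ξ (algebraMap F ℂ k) = algebraMap F ℂ (φ k)) ∧
      (∀ x : s, ξ (x : ℂ) = (e x : ℂ)) := by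
  haveI : IsAlgClosure (Algebra.adjoin F (Set.range ((↑) : s → ℂ))) ℂ :=
    IsAlgClosed.isAlgClosure_of_transcendence_basis _ hs
  set M := Algebra.adjoin F (Set.range ((↑) : s → ℂ)) with hM
  haveI : NoZeroSMulDivisors M ℂ :=
    ⟨fun {c x} h => by
      rw [Algebra.smul_def, mul_eq_zero] at h
      exact h.imp_left fun h => (map_eq_zero_iff _ (FaithfulSMul.algebraMap_injective M ℂ)).mp h⟩
  let ψ : M ≃+* M :=
    (hs.1.aevalEquiv.symm.toRingEquiv.trans
      ((renameEquiv F e).toRingEquiv.trans (MvPolynomial.mapEquiv _ φ))).trans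
      hs.1.aevalEquiv.toRingEquiv
  refine ⟨IsAlgClosure.equivOfEquiv ℂ ℂ ψ, fun k => ?_, fun x => ?_⟩
  · have h1 : algebraMap F ℂ k = algebraMap M ℂ (algebraMap F M k) :=
      (IsScalarTower.algebraMap_apply F M ℂ k)
    have h2 : ψ (algebraMap F M k) = algebraMap F M (φ k) := by
      show hs.1.aevalEquiv ((MvPolynomial.mapEquiv _ φ) ((renameEquiv F e)
        (hs.1.aevalEquiv.symm (algebraMap F M k)))) = _
      have : hs.1.aevalEquiv.symm (algebraMap F M k) = C k := by
        rw [show algebraMap F M k = hs.1.aevalEquiv (C k) from (hs.1.aevalEquiv.commutes k).symm]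
        exact hs.1.aevalEquiv.symm_apply_apply _
      rw [this]
      simp only [renameEquiv_apply, rename_C, mapEquiv_apply, map_C]
      exact (hs.1.aevalEquiv.commutes (φ k))
    rw [h1, IsAlgClosure.equivOfEquiv_algebraMap, h2,
      ← IsScalarTower.algebraMap_apply F M ℂ]
  · have h1 : (x : ℂ) = algebraMap M ℂ (hs.1.aevalEquiv (X x)) := by
      rw [hs.1.algebraMap_aevalEquiv, aeval_X]
    have h2 : ψ (hs.1.aevalEquiv (X x)) = hs.1.aevalEquiv (X (e x)) := by
      show hs.1.aevalEquiv ((MvPolynomial.mapEquiv _ φ) ((renameEquiv F e)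
        (hs.1.aevalEquiv.symm (hs.1.aevalEquiv (X x)))) ) = _
      rw [hs.1.aevalEquiv.symm_apply_apply]
      simp only [renameEquiv_apply, rename_X, mapEquiv_apply, map_X]
    rw [h1, IsAlgClosure.equivOfEquiv_algebraMap, h2, hs.1.algebraMap_aevalEquiv, aeval_X]

end Extend

noncomputable section FixedPt

open Polynomial Cardinal

theorem fixedPt_rat {c : ℂ} (h : ∀ ξ : ℂ ≃+* ℂ, ξ c = c) : ∃ r : ℚ, (r : ℂ) = c := by
  by_cases hc : IsAlgebraic ℚ c
  · by_contra hrat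
    push_neg at hrat
    set Qbar := algebraicClosure ℚ ℂ with hQbar
    haveI : NoZeroSMulDivisors ℚ ↥Qbar :=
      inferInstance
    haveI : IsAlgClosed ↥Qbar := (algebraicClosure.isAlgClosure ℚ ℂ).isAlgClosed
    haveI : Algebra.IsAlgebraic ℚ ↥Qbar := algebraicClosure.isAlgebraic ℚ ℂ
    haveI : IsAlgClosure ℚ ↥Qbar := algebraicClosure.isAlgClosure ℚ ℂ
    haveI : Normal ℚ ↥Qbar := IsAlgClosure.normal ℚ ↥Qbar
    have hcQ : c ∈ Qbar := mem_algebraicClosure_iff.mpr hc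
    set c' : Qbar := ⟨c, hcQ⟩ with hc'
    have hint : IsIntegral ℚ c' := (Algebra.IsAlgebraic.isAlgebraic (A := Qbar) c').isIntegral
    set p := minpoly ℚ c' with hp
    have hpirr := minpoly.irreducible hint
    have hpne : p ≠ 0 := minpoly.ne_zero hint
    have hpdeg : p.natDegree ≠ 1 := by
      intro h1
      have : p.degree = 1 := by
        rw [Polynomial.degree_eq_natDegree hpne, h1]; rfl
      obtain ⟨r, hr⟩ := (minpoly.degree_eq_one_iff).mp this
      exact hrat r (congrArg Subtype.val hr)
    have hsep : p.Separable := hpirr.separable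
    have hsplit : (p.map (algebraMap ℚ Qbar)).Splits := IsAlgClosed.splits _
    have hcard : 1 < Fintype.card (p.rootSet Qbar) := by
      rw [Polynomial.card_rootSet_eq_natDegree hsep hsplit]
      have h0 : 0 < p.natDegree := minpoly.natDegree_pos hint
      omega
    have hc'mem : c' ∈ p.rootSet Qbar := by
      rw [Polynomial.mem_rootSet]
      exact ⟨hpne, minpoly.aeval ℚ c'⟩
    obtain ⟨⟨y, hy⟩, hyne⟩ := Fintype.exists_ne_of_one_lt_card hcard ⟨c', hc'mem⟩
    obtain ⟨σ, hσ⟩ := minpoly.exists_algEquiv_of_root (K := ℚ) (L := Qbar)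
      hint.isAlgebraic (Polynomial.mem_rootSet.mp hy).2
    obtain ⟨s, hs⟩ := exists_isTranscendenceBasis (↥Qbar) ℂ
    obtain ⟨ξ, hξ, -⟩ := exists_ringEquiv_extend ↥Qbar σ.symm.toRingEquiv s hs (Equiv.refl s)
    have hfix := h ξ
    have h1 : ξ c = (σ.symm c' : ℂ) := by
      have := hξ c'
      simpa using this
    have h2 : (σ.symm c' : ℂ) = c := by rw [← h1, hfix]
    have h3 : σ.symm c' = c' := Subtype.ext h2
    have h4 : σ.symm c' = y := by rw [← hσ]; exact σ.symm_apply_apply y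
    exact hyne (Subtype.ext (h4.symm.trans h3))
  · have htr : Transcendental ℚ c := hc
    have hsing : AlgebraicIndependent ℚ ((↑) : ({c} : Set ℂ) → ℂ) := by
      rw [algebraicIndependent_unique_type_iff]
      rw [Set.default_coe_singleton]
      exact htr
    obtain ⟨s, hcs, hmax⟩ := exists_maximal_algebraicIndependent {c} Set.univ
      (Set.subset_univ _) hsing
    have hts : IsTranscendenceBasis ℚ ((↑) : s → ℂ) := by
      refine ⟨hmax.1.1, fun t ht hst => ?_⟩
      simp only [Subtype.range_coe_subtype, Set.setOf_mem_eq] at *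
      exact hmax.eq_of_le ⟨ht, Set.subset_univ _⟩ hst
    have hcmem : c ∈ s := hcs rfl
    have hnsub : ¬ (s ⊆ {c}) := by
      intro hsub
      have hcard := IsAlgClosed.cardinal_le_max_transcendence_basis _ hts
      have h1 : (Cardinal.mk ↥s) ≤ 1 := Cardinal.mk_le_one_iff_set_subsingleton.mpr
        (Set.subsingleton_of_subset_singleton hsub)
      have h2 : (Cardinal.mk ℂ) ≤ Cardinal.aleph0 := by
        refine le_trans (by simpa only [Cardinal.lift_id] using hcard) (max_le (max_le ?_ ?_) le_rfl)
        · exact le_of_eq Cardinal.mkRat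
        · exact h1.trans Cardinal.one_le_aleph0
      rw [mk_complex] at h2
      exact absurd h2 (not_le.mpr Cardinal.aleph0_lt_continuum)
    obtain ⟨d, hd, hdc⟩ := Set.not_subset.mp hnsub
    obtain ⟨ξ, -, hξ⟩ := exists_ringEquiv_extend ℚ (RingEquiv.refl ℚ) s hts
      (Equiv.swap ⟨c, hcmem⟩ ⟨d, hd⟩)
    have hfix := h ξ
    have h2 := hξ ⟨c, hcmem⟩
    rw [Equiv.swap_apply_left] at h2
    exact (hdc (show (d : ℂ) ∈ ({c} : Set ℂ) from h2.symm.trans hfix)).elim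

end FixedPt

theorem stmt6 (V : Type*) [AddCommGroup V] [Module ℚ V] [FiniteDimensional ℚ V]
    (q : V →ₗ[ℚ] V →ₗ[ℚ] ℚ) (hsymm : ∀ x y : V, q x y = q y x)
    (hnd : ∀ x : V, (∀ y : V, q x y = 0) → x = 0)
    -- `qC` is the `ℂ`-bilinear extension of `q` to `V_ℂ = ℂ ⊗[ℚ] V`
    (qC : (ℂ ⊗[ℚ] V) →ₗ[ℂ] (ℂ ⊗[ℚ] V) →ₗ[ℂ] ℂ)
    (hqC : ∀ (a b : ℂ) (v w : V), qC (a ⊗ₜ v) (b ⊗ₜ w) = a * b * (q v w : ℂ))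
    (u : ℂ ⊗[ℚ] V) (hu : u ≠ 0)
    -- no nonzero rational vector is `q`-orthogonal to `u`
    (hirr : ∀ v : V, v ≠ 0 → qC ((1 : ℂ) ⊗ₜ v) u ≠ 0) :
    Submodule.span ℂ {x : ℂ ⊗[ℚ] V | ∃ ξ : ℂ ≃+* ℂ, x = galAction V ξ u} = ⊤ := by
  classical
  by_contra hS
  set S := Submodule.span ℂ {x : ℂ ⊗[ℚ] V | ∃ ξ : ℂ ≃+* ℂ, x = galAction V ξ u} with hSdef
  -- bases
  let b : Module.Basis (Fin (Module.finrank ℚ V)) ℚ V := Module.finBasis ℚ V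
  let bC : Module.Basis (Fin (Module.finrank ℚ V)) ℂ (ℂ ⊗[ℚ] V) := Module.Basis.baseChange ℂ b
  haveI : Module.Finite ℂ (ℂ ⊗[ℚ] V) := Module.Finite.of_basis bC
  -- equivariance of qC
  have hequi : ∀ (ξ : ℂ ≃+* ℂ) (x y : ℂ ⊗[ℚ] V),
      qC (galAction V ξ x) (galAction V ξ y) = ξ (qC x y) := by
    intro ξ x y
    induction x using TensorProduct.induction_on with
    | zero => simp
    | tmul a v =>
        induction y using TensorProduct.induction_on with
        | zero => simp
        | tmul c w =>
            rw [galAction_tmul, galAction_tmul, hqC, hqC, map_mul, map_mul, map_ratCast]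
        | add y1 y2 h1 h2 => rw [map_add, map_add, map_add, map_add, h1, h2]
    | add x1 x2 h1 h2 =>
        rw [map_add, map_add, map_add, LinearMap.add_apply, LinearMap.add_apply, map_add, h1, h2]
  -- repr of galAction
  have hrepr : ∀ (ξ : ℂ ≃+* ℂ) (x : ℂ ⊗[ℚ] V) (i : Fin (Module.finrank ℚ V)),
      bC.repr (galAction V ξ x) i = ξ (bC.repr x i) := by
    intro ξ x i
    induction x using TensorProduct.induction_on with
    | zero => simp
    | tmul a v =>
        rw [galAction_tmul, Module.Basis.baseChange_repr_tmul, Module.Basis.baseChange_repr_tmul,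
          Rat.smul_def, Rat.smul_def, map_mul, map_ratCast]
    | add x y hx hy => simp [map_add, hx, hy]
  -- nondegeneracy of qC
  have hqnd : LinearMap.BilinForm.Nondegenerate q := ⟨fun x hx => hnd x hx, fun y hy => hnd y (fun x => by rw [hsymm]; exact hy x)⟩
  have hdet : (LinearMap.BilinForm.toMatrix b q).det ≠ 0 :=
    (LinearMap.BilinForm.nondegenerate_iff_det_ne_zero b).mp hqnd
  have hmat : LinearMap.BilinForm.toMatrix bC qC = (LinearMap.BilinForm.toMatrix b q).map (algebraMap ℚ ℂ) := by
    ext i j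
    rw [Matrix.map_apply, LinearMap.BilinForm.toMatrix_apply, LinearMap.BilinForm.toMatrix_apply,
      Module.Basis.baseChange_apply, Module.Basis.baseChange_apply, hqC]
    simp
  have hqCnd : LinearMap.BilinForm.Nondegenerate qC := by
    apply (LinearMap.BilinForm.nondegenerate_iff_det_ne_zero bC).mpr
    rw [hmat]
    have hmm : ((LinearMap.BilinForm.toMatrix b) q).map ⇑(algebraMap ℚ ℂ)
        = (algebraMap ℚ ℂ).mapMatrix ((LinearMap.BilinForm.toMatrix b) q) := rfl
    rw [hmm, ← RingHom.map_det, eq_ratCast (algebraMap ℚ ℂ)]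
    exact_mod_cast hdet
  -- surjectivity onto the dual
  have hinj : Function.Injective (qC : (ℂ ⊗[ℚ] V) →ₗ[ℂ] Module.Dual ℂ (ℂ ⊗[ℚ] V)) := by
    intro x y hxy
    have : ∀ z, qC (x - y) z = 0 := fun z => by
      rw [map_sub, LinearMap.sub_apply, hxy, sub_self]
    exact sub_eq_zero.mp (hqCnd.1 _ this)
  have hsurj : Function.Surjective (qC : (ℂ ⊗[ℚ] V) →ₗ[ℂ] Module.Dual ℂ (ℂ ⊗[ℚ] V)) :=
    (LinearMap.injective_iff_surjective_of_finrank_eq_finrank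
      (Subspace.dual_finrank_eq).symm).mp hinj
  -- a nonzero vector orthogonal to S
  have hSlt : S < ⊤ := lt_top_iff_ne_top.mpr hS
  obtain ⟨f, hf0, hfS⟩ := Submodule.exists_dual_map_eq_bot_of_lt_top hSlt inferInstance
  obtain ⟨w, hw⟩ := hsurj f
  have hw0 : w ≠ 0 := fun h => hf0 (by rw [← hw, h, map_zero])
  have hwS : ∀ x ∈ S, qC w x = 0 := by
    intro x hx
    have : f x ∈ Submodule.map f S := Submodule.mem_map_of_mem hx
    rw [hfS, Submodule.mem_bot] at this
    rw [hw]; exact this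
  -- Galois conjugates of w are orthogonal to u
  have hu_mem : u ∈ S := Submodule.subset_span ⟨RingEquiv.refl ℂ, (galAction_refl u).symm⟩
  have horth : ∀ ξ : ℂ ≃+* ℂ, qC (galAction V ξ w) u = 0 := by
    intro ξ
    have h1 : galAction V ξ (galAction V ξ.symm u) = u := by
      rw [galAction_galAction, RingEquiv.symm_trans_self, galAction_refl]
    have h2 : galAction V ξ.symm u ∈ S := galAction_mem_span u ξ.symm hu_mem
    have h3 := hequi ξ w (galAction V ξ.symm u)
    rw [h1, hwS _ h2, map_zero] at h3
    exact h3
  -- descent: the span of the conjugates of w contains a nonzero rational vector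
  set D := Submodule.span ℂ {y : ℂ ⊗[ℚ] V | ∃ ζ : ℂ ≃+* ℂ, y = galAction V ζ w} with hD
  have hwD : w ∈ D := Submodule.subset_span ⟨RingEquiv.refl ℂ, (galAction_refl w).symm⟩
  have hex : ∃ n : ℕ, ∃ x, x ∈ D ∧ x ≠ 0 ∧ (bC.repr x).support.card = n :=
    ⟨_, w, hwD, hw0, rfl⟩
  obtain ⟨x, hxD, hx0, hxcard⟩ := Nat.find_spec hex
  have hreprne : bC.repr x ≠ 0 := fun h => hx0 (by simpa using (LinearEquiv.map_eq_zero_iff bC.repr).mp h)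
  obtain ⟨i0, hi0⟩ := Finsupp.support_nonempty_iff.mpr hreprne
  have ha : bC.repr x i0 ≠ 0 := Finsupp.mem_support_iff.mp hi0
  set y := (bC.repr x i0)⁻¹ • x with hy
  have hyD : y ∈ D := Submodule.smul_mem _ _ hxD
  have hy0 : y ≠ 0 := smul_ne_zero (inv_ne_zero ha) hx0
  have hyrepr : ∀ i, bC.repr y i = (bC.repr x i0)⁻¹ * bC.repr x i := by
    intro i
    rw [hy, map_smul, Finsupp.smul_apply, smul_eq_mul]
  have hyi0 : bC.repr y i0 = 1 := by rw [hyrepr, inv_mul_cancel₀ ha]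
  have hycard : (bC.repr y).support.card = Nat.find hex := by
    rw [hy, map_smul, Finsupp.support_smul_eq (inv_ne_zero ha), hxcard]
  -- y is fixed by every automorphism
  have hyfix : ∀ ξ : ℂ ≃+* ℂ, galAction V ξ y = y := by
    intro ξ
    by_contra hne
    set d := galAction V ξ y - y with hd
    have hdD : d ∈ D := sub_mem (galAction_mem_span w ξ hyD) hyD
    have hd0 : d ≠ 0 := sub_ne_zero.mpr hne
    have hsub : (bC.repr d).support ⊆ (bC.repr y).support.erase i0 := by
      intro i hi
      have hdi : bC.repr d i ≠ 0 := Finsupp.mem_support_iff.mp hi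
      have hdi' : bC.repr d i = ξ (bC.repr y i) - bC.repr y i := by
        rw [hd, map_sub, Finsupp.sub_apply, hrepr]
      rw [Finset.mem_erase, Finsupp.mem_support_iff]
      constructor
      · intro hii
        apply hdi
        rw [hdi', hii, hyi0, map_one, sub_self]
      · intro hyi
        apply hdi
        rw [hdi', hyi, map_zero, sub_self]
    have hlt : (bC.repr d).support.card < Nat.find hex := by
      calc (bC.repr d).support.card ≤ ((bC.repr y).support.erase i0).card :=
            Finset.card_le_card hsub
        _ < (bC.repr y).support.card := by
            apply Finset.card_erase_lt_of_mem
            rw [hy, map_smul, Finsupp.support_smul_eq (inv_ne_zero ha)]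
            exact hi0
        _ = Nat.find hex := hycard
    exact Nat.find_min hex hlt ⟨d, hdD, hd0, rfl⟩
  -- hence coordinates of y are rational
  have hcoords : ∀ i, ∃ r : ℚ, (r : ℂ) = bC.repr y i := by
    intro i
    apply fixedPt_rat
    intro ξ
    rw [← hrepr, hyfix ξ]
  choose r hr using hcoords
  set v : V := ∑ i, r i • b i with hv
  have h1v : (1 : ℂ) ⊗ₜ[ℚ] v = y := by
    rw [hv, tmul_sum]
    rw [show y = ∑ i, bC.repr y i • bC i from (Module.Basis.sum_repr bC y).symm]
    refine Finset.sum_congr rfl fun i _ => ?_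
    rw [tmul_smul, ← algebraMap_smul ℂ (r i) ((1:ℂ) ⊗ₜ[ℚ] b i), eq_ratCast (algebraMap ℚ ℂ),
      hr, Module.Basis.baseChange_apply]
  have hv0 : v ≠ 0 := by
    intro h
    rw [h, tmul_zero] at h1v
    exact hy0 h1v.symm
  -- span of conjugates of w is orthogonal to u
  have horthD : ∀ x ∈ D, qC x u = 0 := by
    intro x hx
    induction hx using Submodule.span_induction with
    | mem x hx => obtain ⟨ζ, rfl⟩ := hx; exact horth ζ
    | zero => simp
    | add x y _ _ h1 h2 => rw [map_add, LinearMap.add_apply, h1, h2, add_zero]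
    | smul a x _ h1 => rw [map_smul, LinearMap.smul_apply, h1, smul_zero]
  have hyDmem : (1 : ℂ) ⊗ₜ[ℚ] v ∈ D := h1v ▸ hyD
  exact hirr v hv0 (horthD _ hyDmem)
end

section
/- Let H be a real vector space of dimension d + 1 with d ≥ 1, and let q be a nondegenerate symmetric bilinear form on H of signature (1, d). Let A ⊆ H be a closed discrete subset for which there exists a constant M > 0 with q(x,x) ≥ −M for all x ∈ A. Then for every h ∈ H with q(h,h) > 0 there exists an open neighbourhood U of h in H such that U ∩ x^⊥ ≠ ∅ for only finitely many x ∈ A; that is, the collection of hyperplanes x^⊥, x ∈ A, is locally finite in the positive cone of H. -/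
theorem stmt7 (H : Type*) [NormedAddCommGroup H] [NormedSpace ℝ H]
    (d : ℕ) (hd : 1 ≤ d) (hdim : Module.finrank ℝ H = d + 1)
    (q : H →ₗ[ℝ] H →ₗ[ℝ] ℝ) (hsymm : ∀ x y : H, q x y = q y x)
    (hnd : ∀ x : H, (∀ y : H, q x y = 0) → x = 0)
    -- `q` has signature `(1, d)`: there is an orthogonal basis with one vector of
    -- positive square and `d` vectors of negative square
    (hsig : ∃ b : Module.Basis (Fin (d + 1)) ℝ H,
      (∀ i j, i ≠ j → q (b i) (b j) = 0) ∧
      0 < q (b 0) (b 0) ∧ ∀ i, i ≠ 0 → q (b i) (b i) < 0)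
    (A : Set H) (hAclosed : IsClosed A) (hAdisc : DiscreteTopology A)
    (M : ℝ) (hM : 0 < M) (hqA : ∀ x ∈ A, -M ≤ q x x) :
    ∀ h : H, 0 < q h h → ∃ U : Set H, IsOpen U ∧ h ∈ U ∧
      {x ∈ A | ∃ y ∈ U, q x y = 0}.Finite := by
  obtain ⟨b, horth, hc0, hci⟩ := hsig
  haveI : FiniteDimensional ℝ H := .of_finrank_pos (by rw [hdim]; omega)
  set c : Fin (d + 1) → ℝ := fun i => q (b i) (b i) with hc
  set v : H → Fin (d + 1) → ℝ := fun x => b.equivFun x with hv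
  have hvsum : ∀ x : H, ∑ i, v x i • b i = x := fun x => b.sum_equivFun x
  -- expansion of q in coordinates
  have hq : ∀ x y : H, q x y = ∑ i, c i * (v x i * v y i) := by
    intro x y
    conv_lhs => rw [← hvsum x, ← hvsum y]
    simp only [map_sum, map_smul, LinearMap.sum_apply, LinearMap.smul_apply, smul_eq_mul]
    refine Finset.sum_congr rfl fun i _ => ?_
    rw [Finset.sum_eq_single i (fun j _ hj => by
      rw [horth j i hj]; ring) (by simp)]
    simp only [hc]; ring
  set s : Finset (Fin (d + 1)) := Finset.univ.erase 0 with hs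
  have hcs : ∀ i ∈ s, 0 < -c i := fun i hi =>
    neg_pos.2 (hci i (Finset.ne_of_mem_erase hi))
  set N : H → ℝ := fun x => ∑ i ∈ s, (-c i) * (v x i) ^ 2 with hN
  have hNnonneg : ∀ x, 0 ≤ N x := fun x =>
    Finset.sum_nonneg fun i hi => mul_nonneg (hcs i hi).le (sq_nonneg _)
  have hsplit : ∀ x y : H, q x y = c 0 * (v x 0 * v y 0) - ∑ i ∈ s, (-c i) * (v x i * v y i) := by
    intro x y
    rw [hq x y, ← Finset.add_sum_erase _ _ (Finset.mem_univ 0)]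
    rw [show (∑ i ∈ Finset.univ.erase 0, c i * (v x i * v y i))
        = -∑ i ∈ s, (-c i) * (v x i * v y i) by
      rw [← Finset.sum_neg_distrib]; exact Finset.sum_congr rfl fun i _ => by ring]
    ring
  have hqxx : ∀ x : H, q x x = c 0 * (v x 0) ^ 2 - N x := by
    intro x
    rw [hsplit x x, hN]
    congr 1
    · ring
    · exact Finset.sum_congr rfl fun i _ => by ring
  -- Cauchy-Schwarz on the negative part
  have hCS : ∀ x y : H, (∑ i ∈ s, (-c i) * (v x i * v y i)) ^ 2 ≤ N x * N y := by
    intro x y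
    have key := Finset.sum_mul_sq_le_sq_mul_sq s (fun i => Real.sqrt (-c i) * v x i)
      (fun i => Real.sqrt (-c i) * v y i)
    have e1 : ∑ i ∈ s, (Real.sqrt (-c i) * v x i) * (Real.sqrt (-c i) * v y i)
        = ∑ i ∈ s, (-c i) * (v x i * v y i) := by
      refine Finset.sum_congr rfl fun i hi => ?_
      rw [show (Real.sqrt (-c i) * v x i) * (Real.sqrt (-c i) * v y i)
          = (Real.sqrt (-c i) * Real.sqrt (-c i)) * (v x i * v y i) by ring,
        Real.mul_self_sqrt (hcs i hi).le]
    have e2 : ∀ z : H, ∑ i ∈ s, (Real.sqrt (-c i) * v z i) ^ 2 = N z := by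
      intro z
      refine Finset.sum_congr rfl fun i hi => ?_
      rw [mul_pow, Real.sq_sqrt (hcs i hi).le]
    rw [e1, e2, e2] at key
    exact key
  intro h hh
  have hNh : N h < c 0 * (v h 0) ^ 2 := by have := hqxx h; linarith [hh]
  set t₁ : ℝ := (2 * N h + c 0 * (v h 0) ^ 2) / 3 with ht₁
  set t₂ : ℝ := (N h + 2 * (c 0 * (v h 0) ^ 2)) / 3 with ht₂
  have hNh0 := hNnonneg h
  have ht₁pos : 0 < t₁ := by rw [ht₁]; linarith
  have ht₁₂ : t₁ < t₂ := by rw [ht₁, ht₂]; linarith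
  set U : Set H := {y : H | N y < t₁ ∧ t₂ < c 0 * (v y 0) ^ 2} with hU
  have hcont : ∀ i, Continuous fun y : H => v y i := by
    intro i
    exact (continuous_apply i).comp
      (LinearMap.continuous_of_finiteDimensional (b.equivFun.toLinearMap))
  have hNcont : Continuous N := by
    rw [hN]
    apply continuous_finset_sum
    intro i _
    exact continuous_const.mul ((hcont i).pow 2)
  have hUopen : IsOpen U := by
    have h1 : IsOpen {y : H | N y < t₁} := isOpen_lt hNcont continuous_const
    have h2 : IsOpen {y : H | t₂ < c 0 * (v y 0) ^ 2} :=
      isOpen_lt continuous_const (continuous_const.mul ((hcont 0).pow 2))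
    exact h1.inter h2
  have hhU : h ∈ U := ⟨by rw [ht₁]; linarith, by rw [ht₂]; linarith⟩
  -- the bound
  set B : ℝ := M * t₂ / (t₂ - t₁) with hB
  have hBpos : 0 < B := by
    apply div_pos (mul_pos hM (lt_trans ht₁pos ht₁₂)) (by linarith)
  have hbound : ∀ x : H, -M ≤ q x x → (∃ y ∈ U, q x y = 0) →
      N x ≤ B ∧ c 0 * (v x 0) ^ 2 ≤ B := by
    intro x hxM hy
    obtain ⟨y, hyU, hxy⟩ := hy
    obtain ⟨hy1, hy2⟩ := hyU
    have ht₂pos : 0 < t₂ := lt_trans ht₁pos ht₁₂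
    have h1 : c 0 * (v x 0 * v y 0) = ∑ i ∈ s, (-c i) * (v x i * v y i) := by
      have := hsplit x y; rw [hxy] at this; linarith
    have h2 : (c 0 * (v x 0) ^ 2) * (c 0 * (v y 0) ^ 2) ≤ N x * N y := by
      calc (c 0 * (v x 0) ^ 2) * (c 0 * (v y 0) ^ 2)
          = (c 0 * (v x 0 * v y 0)) ^ 2 := by ring
        _ = (∑ i ∈ s, (-c i) * (v x i * v y i)) ^ 2 := by rw [h1]
        _ ≤ N x * N y := hCS x y
    have hx0nonneg : 0 ≤ c 0 * (v x 0) ^ 2 := mul_nonneg hc0.le (sq_nonneg _)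
    have hNx := hNnonneg x
    have h3 : (c 0 * (v x 0) ^ 2) * t₂ ≤ N x * t₁ := by
      calc (c 0 * (v x 0) ^ 2) * t₂ ≤ (c 0 * (v x 0) ^ 2) * (c 0 * (v y 0) ^ 2) :=
            mul_le_mul_of_nonneg_left hy2.le hx0nonneg
        _ ≤ N x * N y := h2
        _ ≤ N x * t₁ := mul_le_mul_of_nonneg_left hy1.le hNx
    have h4 : -M ≤ c 0 * (v x 0) ^ 2 - N x := by rw [← hqxx x]; exact hxM
    have h4t : (-M) * t₂ ≤ (c 0 * (v x 0) ^ 2 - N x) * t₂ :=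
      mul_le_mul_of_nonneg_right h4 ht₂pos.le
    have h5 : N x * (t₂ - t₁) ≤ M * t₂ := by nlinarith [h4t, h3]
    have hNxB : N x ≤ B := by
      rw [hB, le_div_iff₀ (by linarith)]; linarith
    refine ⟨hNxB, ?_⟩
    have hfin : (c 0 * (v x 0) ^ 2) * t₂ ≤ B * t₂ :=
      le_trans h3 (mul_le_mul hNxB ht₁₂.le ht₁pos.le hBpos.le)
    exact le_of_mul_le_mul_right hfin ht₂pos
  -- coordinate bound for such x
  set K : Fin (d + 1) → ℝ := fun i => Real.sqrt (B / |c i|) with hK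
  have hcoord : ∀ x : H, N x ≤ B → c 0 * (v x 0) ^ 2 ≤ B → ∀ i, |v x i| ≤ K i := by
    intro x hNx hx0 i
    have hsq : (v x i) ^ 2 ≤ B / |c i| := by
      rcases eq_or_ne i 0 with rfl | hi
      · rw [abs_of_pos hc0, le_div_iff₀ hc0]; linarith
      · have hmem : i ∈ s := Finset.mem_erase.2 ⟨hi, Finset.mem_univ i⟩
        have hpos := hcs i hmem
        have hle : (-c i) * (v x i) ^ 2 ≤ N x :=
          Finset.single_le_sum (fun j hj => mul_nonneg (hcs j hj).le (sq_nonneg _)) hmem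
        rw [abs_of_neg (by linarith : c i < 0), le_div_iff₀ hpos]
        calc (v x i) ^ 2 * -c i = (-c i) * (v x i) ^ 2 := by ring
          _ ≤ N x := hle
          _ ≤ B := hNx
    calc |v x i| = Real.sqrt ((v x i) ^ 2) := (Real.sqrt_sq_eq_abs _).symm
      _ ≤ K i := Real.sqrt_le_sqrt hsq
  set R : ℝ := ∑ i, K i * ‖b i‖ with hR
  have hnorm : ∀ x : H, (∀ i, |v x i| ≤ K i) → ‖x‖ ≤ R := by
    intro x hx
    calc ‖x‖ = ‖∑ i, v x i • b i‖ := by rw [hvsum]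
      _ ≤ ∑ i, ‖v x i • b i‖ := norm_sum_le _ _
      _ ≤ R := by
        rw [hR]
        refine Finset.sum_le_sum fun i _ => ?_
        rw [norm_smul, Real.norm_eq_abs]
        exact mul_le_mul_of_nonneg_right (hx i) (norm_nonneg _)
  refine ⟨U, hUopen, hhU, ?_⟩
  have hsub : {x ∈ A | ∃ y ∈ U, q x y = 0} ⊆ A ∩ Metric.closedBall 0 R := by
    rintro x ⟨hxA, hy⟩
    refine ⟨hxA, ?_⟩
    rw [Metric.mem_closedBall, dist_zero_right]
    obtain ⟨h1, h2⟩ := hbound x (hqA x hxA) hy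
    exact hnorm x (hcoord x h1 h2)
  have hcpt : IsCompact (A ∩ Metric.closedBall 0 R) :=
    (isCompact_closedBall (0 : H) R).inter_left hAclosed
  haveI : DiscreteTopology ↥(A ∩ Metric.closedBall 0 R) :=
    hAdisc.of_subset Set.inter_subset_left
  exact (hcpt.finite (isDiscrete_iff_discreteTopology.mpr inferInstance)).subset hsub
end

section
/- Let H be a real vector space of dimension d + 1 with d ≥ 1, and let q be a nondegenerate symmetric bilinear form on H of signature (1, d). Let A ⊆ H be a closed discrete subset for which there exists a constant M > 0 with q(x,x) ≥ −M for all x ∈ A, and assume moreover that there is a proper linear subspace H₀ ⊊ H with A ⊆ H₀. Let u ∈ H \ H₀ satisfy q(u,u) = 0. Then there exists an open neighbourhood U of u in H such that U ∩ x^⊥ ≠ ∅ for only finitely many x ∈ A. -/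
theorem stmt8 (H : Type*) [NormedAddCommGroup H] [NormedSpace ℝ H]
    (d : ℕ) (hd : 1 ≤ d) (hdim : Module.finrank ℝ H = d + 1)
    (q : H →ₗ[ℝ] H →ₗ[ℝ] ℝ) (hsymm : ∀ x y : H, q x y = q y x)
    (hnd : ∀ x : H, (∀ y : H, q x y = 0) → x = 0)
    -- `q` has signature `(1, d)`: there is an orthogonal basis with one vector of
    -- positive square and `d` vectors of negative square
    (hsig : ∃ b : Module.Basis (Fin (d + 1)) ℝ H,
      (∀ i j, i ≠ j → q (b i) (b j) = 0) ∧
      0 < q (b 0) (b 0) ∧ ∀ i, i ≠ 0 → q (b i) (b i) < 0)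
    (A : Set H) (hAclosed : IsClosed A) (hAdisc : DiscreteTopology A)
    (M : ℝ) (hM : 0 < M) (hqA : ∀ x ∈ A, -M ≤ q x x)
    (H₀ : Submodule ℝ H) (hH₀ : H₀ ≠ ⊤) (hAH₀ : A ⊆ (H₀ : Set H))
    (u : H) (hu : u ∉ H₀) (hiso : q u u = 0) :
    ∃ U : Set H, IsOpen U ∧ u ∈ U ∧ {x ∈ A | ∃ y ∈ U, q x y = 0}.Finite := by
  obtain ⟨b, horth, hpos, hneg⟩ := hsig
  haveI : FiniteDimensional ℝ H := b.finiteDimensional_of_finite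
  -- expansion of q in the orthogonal basis
  have hexp : ∀ x z : H,
      q x z = ∑ i, b.repr x i * (b.repr z i * q (b i) (b i)) := by
    intro x z
    conv_lhs => rw [← b.sum_repr x, ← b.sum_repr z]
    simp only [map_sum, map_smul, LinearMap.sum_apply, LinearMap.smul_apply, smul_eq_mul]
    refine Finset.sum_congr rfl fun j _ => ?_
    rw [Finset.sum_eq_single j]
    · ring
    · intro i _ hi
      rw [horth i j hi]; ring
    · intro h; exact absurd (Finset.mem_univ j) h
  -- vectors with vanishing 0-th coordinate and nonneg square are zero
  have hker : ∀ w : H, b.repr w 0 = 0 → 0 ≤ q w w → w = 0 := by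
    intro w h0 hw
    have hle : ∀ i : Fin (d+1), i ∈ Finset.univ →
        b.repr w i * (b.repr w i * q (b i) (b i)) ≤ 0 := by
      intro i _
      rcases eq_or_ne i 0 with rfl | hi
      · simp [h0]
      · nlinarith [hneg i hi, sq_nonneg (b.repr w i)]
    have hsum0 : ∑ i, b.repr w i * (b.repr w i * q (b i) (b i)) = 0 :=
      le_antisymm (Finset.sum_nonpos hle) (by rw [← hexp w w]; exact hw)
    have hterm := (Finset.sum_eq_zero_iff_of_nonpos hle).mp hsum0
    have hcoord : ∀ i, b.repr w i = 0 := by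
      intro i
      rcases eq_or_ne i 0 with rfl | hi
      · exact h0
      · have h1 := hterm i (Finset.mem_univ i)
        have hni := hneg i hi
        have h2 : (b.repr w i) ^ 2 * q (b i) (b i) = 0 := by rw [← h1]; ring
        have h3 : (b.repr w i) ^ 2 = 0 := by
          rcases mul_eq_zero.mp h2 with h | h
          · exact h
          · exact absurd h hni.ne
        exact pow_eq_zero_iff (by norm_num) |>.mp h3
    have : b.repr w = 0 := Finsupp.ext hcoord
    simpa using b.repr.map_eq_zero_iff.mp (by simpa using this)
  have hu0 : b.repr u 0 ≠ 0 := by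
    intro h0
    have : u = 0 := hker u h0 (le_of_eq hiso.symm)
    exact hu (this ▸ H₀.zero_mem)
  -- key algebraic lemma: isotropic-orthogonal with nonneg square means parallel to u
  have hlineu : ∀ y : H, q y u = 0 → 0 ≤ q y y → ∃ t : ℝ, y = t • u := by
    intro y hyu hyy
    set t := b.repr y 0 / b.repr u 0 with ht
    have hz0 : b.repr (y - t • u) 0 = 0 := by
      rw [map_sub, map_smul]
      rw [Finsupp.sub_apply, Finsupp.smul_apply, smul_eq_mul, ht, div_mul_cancel₀ _ hu0, sub_self]
    have hsy : q u y = 0 := by rw [hsymm]; exact hyu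
    have hz : q (y - t • u) (y - t • u) = q y y := by
      simp only [map_sub, map_smul, LinearMap.sub_apply, LinearMap.smul_apply,
        smul_eq_mul, hyu, hsy, hiso]
      ring
    have := hker _ hz0 (by rw [hz]; exact hyy)
    exact ⟨t, by rw [← sub_eq_zero]; exact this⟩
  -- bound for the bilinear form
  obtain ⟨C, hC1, hC⟩ : ∃ C : ℝ, 1 ≤ C ∧ ∀ x y : H, |q x y| ≤ C * ‖x‖ * ‖y‖ := by
    let q₁ : H →ₗ[ℝ] (H →L[ℝ] ℝ) :=
      { toFun := fun x => LinearMap.toContinuousLinearMap (q x)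
        map_add' := by intro x y; ext z; simp
        map_smul' := by intro c x; ext z; simp }
    let Q : H →L[ℝ] (H →L[ℝ] ℝ) := LinearMap.toContinuousLinearMap q₁
    refine ⟨max ‖Q‖ 1, le_max_right _ _, fun x y => ?_⟩
    have h1 : |q x y| = ‖(Q x) y‖ := by
      simp [Q, q₁, Real.norm_eq_abs]
    rw [h1]
    calc ‖(Q x) y‖ ≤ ‖Q x‖ * ‖y‖ := (Q x).le_opNorm y
      _ ≤ (‖Q‖ * ‖x‖) * ‖y‖ := by
          gcongr
          exact Q.le_opNorm x
      _ ≤ max ‖Q‖ 1 * ‖x‖ * ‖y‖ := by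
          gcongr
          exact le_max_left _ _
  have hCpos : (0:ℝ) < C := lt_of_lt_of_le one_pos hC1
  -- continuity helpers
  have hlinc : Continuous fun w : H => q w u :=
    LinearMap.continuous_of_finiteDimensional (q.flip u)
  have hqqc : Continuous fun w : H => q w w := by
    have h2 : Continuous fun p : H × H => q p.1 p.2 := by
      let q₁ : H →ₗ[ℝ] (H →L[ℝ] ℝ) :=
        { toFun := fun x => LinearMap.toContinuousLinearMap (q x)
          map_add' := by intro x y; ext z; simp
          map_smul' := by intro c x; ext z; simp }
      have hc : Continuous q₁ := LinearMap.continuous_of_finiteDimensional q₁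
      have : Continuous fun p : H × H => (q₁ p.1) p.2 :=
        (hc.comp continuous_fst).clm_apply continuous_snd
      simpa [q₁] using this
    exact h2.comp (continuous_id.prodMk continuous_id)
  -- the main quantitative bound
  obtain ⟨ε, hε, R, hR⟩ : ∃ ε > (0:ℝ), ∃ R : ℝ,
      ∀ x ∈ H₀, -M ≤ q x x → |q x u| ≤ ε * ‖x‖ → ‖x‖ ≤ R := by
    by_contra hcon
    push_neg at hcon
    have hx : ∀ n : ℕ, ∃ x : H, x ∈ H₀ ∧ -M ≤ q x x ∧
        |q x u| ≤ ((n:ℝ)+1)⁻¹ * ‖x‖ ∧ (n:ℝ)+1 < ‖x‖ := by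
      intro n
      obtain ⟨x, hx1, hx2, hx3, hx4⟩ := hcon (((n:ℝ)+1)⁻¹) (by positivity) ((n:ℝ)+1)
      exact ⟨x, hx1, hx2, hx3, hx4⟩
    choose x hxH hxq hxu hxn using hx
    have hxpos : ∀ n, 0 < ‖x n‖ := fun n => lt_trans (by positivity) (hxn n)
    set y : ℕ → H := fun n => ‖x n‖⁻¹ • x n with hy
    have hymem : ∀ n, y n ∈ Metric.sphere (0:H) 1 := by
      intro n
      rw [Metric.mem_sphere, dist_zero_right, hy]
      simp [norm_smul, inv_mul_cancel₀ (hxpos n).ne']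
    obtain ⟨z, hz, φ, hφ, hlim⟩ := (isCompact_sphere (0:H) 1).tendsto_subseq hymem
    have hznorm : ‖z‖ = 1 := by simpa using hz
    have hzH₀ : z ∈ H₀ := by
      have hcl : IsClosed (H₀ : Set H) := Submodule.closed_of_finiteDimensional H₀
      exact hcl.mem_of_tendsto hlim (Filter.Eventually.of_forall fun n =>
        H₀.smul_mem _ (hxH (φ n)))
    -- q z u = 0
    have hqy : ∀ n : ℕ, |q (y (φ n)) u| ≤ ((n:ℝ)+1)⁻¹ := by
      intro n
      have h1 : |q (y (φ n)) u| = ‖x (φ n)‖⁻¹ * |q (x (φ n)) u| := by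
        rw [hy]
        simp only [map_smul, LinearMap.smul_apply, smul_eq_mul, abs_mul, abs_inv, abs_norm]
      rw [h1]
      have h2 : ‖x (φ n)‖⁻¹ * |q (x (φ n)) u| ≤
          ‖x (φ n)‖⁻¹ * (((φ n:ℝ)+1)⁻¹ * ‖x (φ n)‖) := by
        gcongr
        exact hxu (φ n)
      have h3 : ‖x (φ n)‖⁻¹ * (((φ n:ℝ)+1)⁻¹ * ‖x (φ n)‖) = ((φ n:ℝ)+1)⁻¹ := by
        rw [mul_left_comm, inv_mul_cancel₀ (hxpos (φ n)).ne', mul_one]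
      rw [h3] at h2
      refine h2.trans ?_
      have hmn : n ≤ φ n := hφ.le_apply
      have : (n:ℝ) + 1 ≤ (φ n : ℝ) + 1 := by
        have := (Nat.cast_le (α := ℝ)).mpr hmn
        linarith
      exact inv_anti₀ (by positivity) this
    have hzu : q z u = 0 := by
      have h1 : Filter.Tendsto (fun n => q (y (φ n)) u) Filter.atTop (nhds (q z u)) :=
        (hlinc.tendsto z).comp hlim
      have h2 : Filter.Tendsto (fun n => q (y (φ n)) u) Filter.atTop (nhds 0) := by
        apply squeeze_zero_norm (fun n => hqy n)
        exact tendsto_one_div_add_atTop_nhds_zero_nat.congr (fun n => one_div _)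
      exact tendsto_nhds_unique h1 h2
    -- q z z ≥ 0
    have hzz : 0 ≤ q z z := by
      have h3 : Filter.Tendsto (fun n => q (y (φ n)) (y (φ n)))
          Filter.atTop (nhds (q z z)) := (hqqc.tendsto z).comp hlim
      have h4 : ∀ n : ℕ, -(M * ((n:ℝ)+1)⁻¹) ≤ q (y (φ n)) (y (φ n)) := by
        intro n
        have h5 : q (y (φ n)) (y (φ n)) = ‖x (φ n)‖⁻¹ * (‖x (φ n)‖⁻¹ * q (x (φ n)) (x (φ n))) := by
          simp [hy, map_smul, smul_eq_mul]
        have hpos := hxpos (φ n)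
        have hn1 : (n:ℝ) + 1 ≤ ‖x (φ n)‖ := by
          have h6 : (n:ℝ) + 1 ≤ (φ n : ℝ) + 1 := by
            have hmn : n ≤ φ n := hφ.le_apply
            have := (Nat.cast_le (α := ℝ)).mpr hmn
            linarith
          linarith [hxn (φ n)]
        have key : -(M * ((n:ℝ)+1)⁻¹) ≤ ‖x (φ n)‖⁻¹ * (‖x (φ n)‖⁻¹ * q (x (φ n)) (x (φ n))) := by
          have hq := hxq (φ n)
          have hinv : ‖x (φ n)‖⁻¹ ≤ ((n:ℝ)+1)⁻¹ := by
            apply inv_anti₀ (by positivity) hn1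
          have hinvpos : 0 < ‖x (φ n)‖⁻¹ := by positivity
          have hone : ‖x (φ n)‖⁻¹ ≤ 1 := by
            apply inv_le_one_of_one_le₀
            linarith [Nat.cast_nonneg (α := ℝ) n]
          have hle1 : ‖x (φ n)‖⁻¹ * ‖x (φ n)‖⁻¹ ≤ ((n:ℝ)+1)⁻¹ := by
            calc ‖x (φ n)‖⁻¹ * ‖x (φ n)‖⁻¹ ≤ ((n:ℝ)+1)⁻¹ * 1 :=
                  mul_le_mul hinv hone hinvpos.le (by positivity)
              _ = ((n:ℝ)+1)⁻¹ := mul_one _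
          calc -(M * ((n:ℝ)+1)⁻¹) = ((n:ℝ)+1)⁻¹ * (-M) := by ring
            _ ≤ (‖x (φ n)‖⁻¹ * ‖x (φ n)‖⁻¹) * (-M) :=
                mul_le_mul_of_nonpos_right hle1 (by linarith)
            _ ≤ (‖x (φ n)‖⁻¹ * ‖x (φ n)‖⁻¹) * q (x (φ n)) (x (φ n)) :=
                mul_le_mul_of_nonneg_left hq (mul_nonneg hinvpos.le hinvpos.le)
            _ = ‖x (φ n)‖⁻¹ * (‖x (φ n)‖⁻¹ * q (x (φ n)) (x (φ n))) := mul_assoc _ _ _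
        rw [h5]; exact key
      have h7 : Filter.Tendsto (fun n : ℕ => -(M * ((n:ℝ)+1)⁻¹)) Filter.atTop (nhds 0) := by
        have := tendsto_one_div_add_atTop_nhds_zero_nat (𝕜 := ℝ)
        have h8 : Filter.Tendsto (fun n : ℕ => M * ((n:ℝ)+1)⁻¹) Filter.atTop (nhds 0) := by
          simpa [one_div] using this.const_mul M
        simpa using h8.neg
      exact le_of_tendsto_of_tendsto' h7 h3 h4
    obtain ⟨t, htz⟩ := hlineu z hzu hzz
    have ht0 : t ≠ 0 := by
      intro h
      rw [h, zero_smul] at htz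
      rw [htz] at hznorm
      simp at hznorm
    have : u = t⁻¹ • z := by
      rw [htz, smul_smul, inv_mul_cancel₀ ht0, one_smul]
    exact hu (this ▸ H₀.smul_mem t⁻¹ hzH₀)
  -- conclude
  refine ⟨Metric.ball u (ε / C), Metric.isOpen_ball,
    Metric.mem_ball_self (by positivity), ?_⟩
  have hsub : {x ∈ A | ∃ y ∈ Metric.ball u (ε / C), q x y = 0} ⊆
      A ∩ Metric.closedBall 0 R := by
    rintro x ⟨hxA, y, hyU, hxy⟩
    refine ⟨hxA, ?_⟩
    rw [Metric.mem_closedBall, dist_zero_right]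
    apply hR x (hAH₀ hxA) (hqA x hxA)
    have h1 : q x u = q x (u - y) := by rw [map_sub, hxy, sub_zero]
    have h2 : ‖u - y‖ ≤ ε / C := by
      rw [Metric.mem_ball] at hyU
      rw [← dist_eq_norm, dist_comm]
      exact le_of_lt hyU
    calc |q x u| = |q x (u - y)| := by rw [h1]
      _ ≤ C * ‖x‖ * ‖u - y‖ := hC x (u - y)
      _ ≤ C * ‖x‖ * (ε / C) := by
          gcongr
      _ = ε * ‖x‖ := by field_simp
  refine Set.Finite.subset ?_ hsub
  have hcpt : IsCompact (A ∩ Metric.closedBall 0 R) :=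
    (isCompact_closedBall (0:H) R).inter_left hAclosed
  haveI : DiscreteTopology ↥(A ∩ Metric.closedBall 0 R) :=
    DiscreteTopology.of_subset hAdisc Set.inter_subset_left
  exact hcpt.finite ⟨‹_›⟩
end
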